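/- If a 2-edge-connected graph G of order n has r even blocks in its block decomposition, then r ≤ (n − 1)/3. -/

import Mathlib

open SimpleGraph

def IsRainbowColoring {V α : Type*} (G : SimpleGraph V) (c : Sym2 V → α) : Prop :=
  ∀ u v : V, ∃ p : G.Walk u v, p.IsPath ∧ (p.edges.map c).Nodup

noncomputable def rc {V : Type*} (G : SimpleGraph V) : ℕ :=
  sInf {t : ℕ | ∃ c : Sym2 V → Fin t, IsRainbowColoring G c}

def IsBlock {V : Type*} (G : SimpleGraph V) (B : Set V) : Prop :=
  ((G.induce B).Connected ∧ ∀ v ∈ B, B ≠ {v} → (G.induce (B \ {v})).Connected) ∧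
  ∀ B' : Set V, B ⊆ B' →
    ((G.induce B').Connected ∧ ∀ v ∈ B', B' ≠ {v} → (G.induce (B' \ {v})).Connected) →
    B' = B

def TwoConnected {V : Type*} (G : SimpleGraph V) : Prop :=
  G.Connected ∧ ∀ v : V, (G.induce {u | u ≠ v}).Connected

def TwoEdgeConnected {V : Type*} (G : SimpleGraph V) : Prop :=
  G.Connected ∧ ∀ e ∈ G.edgeSet, (G.deleteEdges {e}).Connected


section Aux

variable {V : Type*} {G : SimpleGraph V}

lemma connected_delete_nonbridge {T : SimpleGraph V} (hc : T.Connected) {a b : V}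
    (hab : T.Adj a b) (hr : (T \ fromEdgeSet {s(a, b)}).Reachable a b) :
    (T \ fromEdgeSet {s(a, b)}).Connected := by
  rw [connected_iff]
  refine ⟨?_, hc.nonempty⟩
  have key : ∀ {u v : V}, T.Walk u v → (T \ fromEdgeSet {s(a, b)}).Reachable u v := by
    intro u v p
    induction p with
    | nil => exact Reachable.refl _
    | cons h q ih =>
      refine Reachable.trans ?_ ih
      rename_i x y _
      by_cases he : s(x, y) = s(a, b)
      · rw [Sym2.eq_iff] at he
        rcases he with ⟨rfl, rfl⟩ | ⟨rfl, rfl⟩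
        · exact hr
        · exact hr.symm
      · exact Adj.reachable (by
          rw [sdiff_adj]
          refine ⟨h, fun hf => ?_⟩
          rw [fromEdgeSet_adj] at hf
          exact he hf.1)
  intro u v
  exact key (hc.preconnected u v).some

lemma exists_spanning_tree [Fintype V] (G : SimpleGraph V) (h : G.Connected) :
    ∃ T : SimpleGraph V, T ≤ G ∧ T.IsTree := by
  classical
  let S : Set ℕ := {n | ∃ T : SimpleGraph V, T ≤ G ∧ T.Connected ∧ T.edgeSet.ncard = n}
  have hS : S.Nonempty := ⟨G.edgeSet.ncard, G, le_rfl, h, rfl⟩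
  obtain ⟨T, hTG, hTc, hTcard⟩ := Nat.sInf_mem hS
  refine ⟨T, hTG, hTc, ?_⟩
  rw [isAcyclic_iff_forall_adj_isBridge]
  intro x y hxy
  by_contra hnb
  rw [isBridge_iff] at hnb
  push_neg at hnb
  have hr : (T \ fromEdgeSet {s(x, y)}).Reachable x y := hnb
  have hconn := connected_delete_nonbridge hTc hxy hr
  have hlt : (T \ fromEdgeSet {s(x, y)}).edgeSet.ncard < sInf S := by
    rw [← hTcard]
    have hes : (T \ fromEdgeSet {s(x, y)}).edgeSet = T.edgeSet \ {s(x, y)} := by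
      rw [edgeSet_sdiff, edgeSet_fromEdgeSet, edgeSet_sdiff_sdiff_isDiag]
    rw [hes]
    exact Set.ncard_diff_singleton_lt_of_mem hxy T.edgeSet.toFinite
  have hmem : (T \ fromEdgeSet {s(x, y)}).edgeSet.ncard ∈ S :=
    ⟨T \ fromEdgeSet {s(x, y)}, le_trans sdiff_le hTG, hconn, rfl⟩
  exact absurd (Nat.sInf_le hmem) (by omega)


def suppSet {u v : V} (p : G.Walk u v) : Set V := {x | x ∈ p.support}

lemma start_mem_suppSet {u v : V} (p : G.Walk u v) : u ∈ suppSet p := p.start_mem_support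

lemma end_mem_suppSet {u v : V} (p : G.Walk u v) : v ∈ suppSet p := p.end_mem_support

lemma suppSet_connected {u v : V} (p : G.Walk u v) : (G.induce (suppSet p)).Connected :=
  p.connected_induce_support

lemma suppSet_tail {u v : V} (p : G.Walk u v) (hp : p.IsPath) (hn : ¬p.Nil) :
    suppSet p \ {u} = suppSet p.tail := by
  have h1 : p.support = u :: p.tail.support := (p.cons_support_tail hn).symm
  have h2 : u ∉ p.tail.support := by
    have := hp.support_nodup
    rw [h1] at this
    exact (List.nodup_cons.mp this).1
  ext x
  simp only [suppSet, Set.mem_diff, Set.mem_setOf_eq, Set.mem_singleton_iff, h1, List.mem_cons]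
  constructor
  · rintro ⟨hx | hx, hxu⟩
    · exact absurd hx hxu
    · exact hx
  · intro hx
    exact ⟨Or.inr hx, fun h => h2 (h ▸ hx)⟩

lemma suppSet_reverse {u v : V} (p : G.Walk u v) : suppSet p.reverse = suppSet p := by
  ext x; simp [suppSet]

lemma suppSet_take_drop [DecidableEq V] {u v t : V} (p : G.Walk u v) (h : t ∈ p.support) :
    suppSet p = suppSet (p.takeUntil t h) ∪ suppSet (p.dropUntil t h) := by
  ext x
  simp only [suppSet, Set.mem_setOf_eq, Set.mem_union]
  conv_lhs => rw [← p.take_spec h]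
  exact Walk.mem_support_append_iff _ _

lemma reachable_induce_of_walk {S : Set V} {u v : V} (p : G.Walk u v)
    (hS : suppSet p ⊆ S) (hu : u ∈ S) (hv : v ∈ S) :
    (G.induce S).Reachable ⟨u, hu⟩ ⟨v, hv⟩ := by
  induction p with
  | nil => exact Reachable.refl _
  | cons h q ih =>
    rename_i a b c
    have hb : b ∈ S := hS (by simp [suppSet])
    have hq : suppSet q ⊆ S := fun x hx => hS (by
      simp only [suppSet, Set.mem_setOf_eq, Walk.support_cons, List.mem_cons]
      exact Or.inr hx)
    exact Reachable.trans (Adj.reachable (by exact h : (G.induce S).Adj ⟨a, hu⟩ ⟨b, hb⟩))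
      (ih hq hb hv)

lemma singleton_induce_connected (a : V) : (G.induce ({a} : Set V)).Connected := by
  rw [connected_iff]
  refine ⟨fun x y => ?_, ⟨⟨a, rfl⟩⟩⟩
  have : x = y := Subtype.ext (x.2.trans y.2.symm)
  exact this ▸ Reachable.refl _

/-- deleting a vertex from a "good" set with ≥ 2 elements keeps it connected -/
lemma good_diff {B : Set V}
    (hB : (G.induce B).Connected ∧ ∀ v ∈ B, B ≠ {v} → (G.induce (B \ {v})).Connected)
    (hex : ∃ x ∈ B, ∃ y ∈ B, x ≠ y) (t : V) : (G.induce (B \ {t})).Connected := by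
  by_cases htB : t ∈ B
  · refine hB.2 t htB ?_
    rintro rfl
    obtain ⟨x, hx, y, hy, hxy⟩ := hex
    exact hxy (hx.trans hy.symm)
  · have : B \ {t} = B := by
      ext x; simp only [Set.mem_diff, Set.mem_singleton_iff]
      exact ⟨fun h => h.1, fun h => ⟨h, fun he => htB (he ▸ h)⟩⟩
    rw [this]; exact hB.1

lemma union_path_del {A : Set V} (hA : (G.induce A).Connected) {u v : V}
    (p : G.Walk u v) (hp : p.IsPath) (hu : u ∈ A) (hv : v ∈ A) (t : V)
    (htA : t ∉ A) (htv : t ≠ v) :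
    (G.induce ((A ∪ suppSet p) \ {t})).Connected := by
  classical
  have htu : t ≠ u := fun h => htA (h ▸ hu)
  by_cases hts : t ∈ p.support
  · set q1 := p.takeUntil t hts with hq1def
    set q2 := p.dropUntil t hts with hq2def
    have hq1 : q1.IsPath := hp.takeUntil hts
    have hq2 : q2.IsPath := hp.dropUntil hts
    have hX1 : suppSet q1 \ {t} = suppSet q1.reverse.tail := by
      rw [← suppSet_reverse q1]
      exact suppSet_tail q1.reverse hq1.reverse (Walk.not_nil_of_ne htu)
    have hX2 : suppSet q2 \ {t} = suppSet q2.tail :=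
      suppSet_tail q2 hq2 (Walk.not_nil_of_ne htv)
    have E : (A ∪ suppSet p) \ {t}
        = (A ∪ suppSet q1.reverse.tail) ∪ suppSet q2.tail := by
      rw [← hX1, ← hX2, suppSet_take_drop p hts]
      ext x
      simp only [Set.mem_diff, Set.mem_union, Set.mem_singleton_iff]
      constructor
      · rintro ⟨h1 | h1 | h1, h2⟩
        · exact Or.inl (Or.inl h1)
        · exact Or.inl (Or.inr ⟨h1, h2⟩)
        · exact Or.inr ⟨h1, h2⟩
      · rintro ((h1 | ⟨h1, h2⟩) | ⟨h1, h2⟩)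
        · exact ⟨Or.inl h1, fun he => htA (he ▸ h1)⟩
        · exact ⟨Or.inr (Or.inl h1), h2⟩
        · exact ⟨Or.inr (Or.inr h1), h2⟩
    rw [E]
    have step1 : (G.induce (A ∪ suppSet q1.reverse.tail)).Connected := by
      refine induce_union_connected hA.preconnected (suppSet_connected _).preconnected ⟨u, hu, ?_⟩
      exact end_mem_suppSet _
    refine induce_union_connected step1.preconnected (suppSet_connected _).preconnected ⟨v, Or.inl hv, ?_⟩
    exact end_mem_suppSet _
  · have E : (A ∪ suppSet p) \ {t} = A ∪ suppSet p := by
      ext x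
      simp only [Set.mem_diff, Set.mem_union, Set.mem_singleton_iff]
      refine ⟨fun h => h.1, fun h => ⟨h, ?_⟩⟩
      rintro rfl
      rcases h with h | h
      · exact htA h
      · exact hts h
    rw [E]
    exact induce_union_connected hA.preconnected (suppSet_connected p).preconnected ⟨u, hu, start_mem_suppSet p⟩

lemma block_suppSet_subset {B : Set V} (hB : IsBlock G B)
    (hex : ∃ x ∈ B, ∃ y ∈ B, x ≠ y) {u v : V} (hu : u ∈ B) (hv : v ∈ B)
    (p : G.Walk u v) (hp : p.IsPath) : suppSet p ⊆ B := by
  classical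
  by_cases huv : u = v
  · subst huv
    rw [(Walk.isPath_iff_eq_nil (p := p)).mp hp]
    intro x hx
    simp only [suppSet, Walk.support_nil, List.mem_singleton, Set.mem_setOf_eq] at hx
    exact hx ▸ hu
  set S := B ∪ suppSet p with hSdef
  have hconn : (G.induce S).Connected :=
    induce_union_connected hB.1.1.preconnected (suppSet_connected p).preconnected ⟨u, hu, start_mem_suppSet p⟩
  have hdel : ∀ t ∈ S, S ≠ {t} → (G.induce (S \ {t})).Connected := by
    intro t htS _
    have hBt : (G.induce (B \ {t})).Connected := good_diff hB.1 ⟨u, hu, v, hv, huv⟩ t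
    by_cases htu : t = u
    · subst htu
      have E : S \ {t} = (B \ {t}) ∪ (suppSet p \ {t}) := by
        ext x
        simp only [hSdef, Set.mem_diff, Set.mem_union, Set.mem_singleton_iff]
        tauto
      rw [E, suppSet_tail p hp (Walk.not_nil_of_ne huv)]
      refine induce_union_connected hBt.preconnected (suppSet_connected _).preconnected ⟨v, ⟨hv, Ne.symm huv⟩, ?_⟩
      exact end_mem_suppSet _
    · by_cases htv : t = v
      · subst htv
        have E : S \ {t} = (B \ {t}) ∪ (suppSet p.reverse \ {t}) := by
          rw [suppSet_reverse]
          ext x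
          simp only [hSdef, Set.mem_diff, Set.mem_union, Set.mem_singleton_iff]
          tauto
        rw [E, suppSet_tail p.reverse hp.reverse (Walk.not_nil_of_ne (Ne.symm huv))]
        refine induce_union_connected hBt.preconnected (suppSet_connected _).preconnected ⟨u, ⟨hu, huv⟩, ?_⟩
        exact end_mem_suppSet _
      · have hres := union_path_del hBt p hp ⟨hu, Ne.symm htu⟩ ⟨hv, Ne.symm htv⟩ t
          (fun h => h.2 rfl) htv
        have E : ((B \ {t}) ∪ suppSet p) \ {t} = S \ {t} := by
          ext x
          simp only [hSdef, Set.mem_diff, Set.mem_union, Set.mem_singleton_iff]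
          tauto
        rw [E] at hres
        exact hres
  have hSB := hB.2 S Set.subset_union_left ⟨hconn, hdel⟩
  intro x hx
  rw [← hSB]
  exact Or.inr hx

lemma blocks_inter {B1 B2 : Set V} (h1 : IsBlock G B1) (h2 : IsBlock G B2)
    (hne : B1 ≠ B2) {x y : V} (hx : x ∈ B1 ∩ B2) (hy : y ∈ B1 ∩ B2) : x = y := by
  by_contra hxy
  have hex1 : ∃ a ∈ B1, ∃ b ∈ B1, a ≠ b := ⟨x, hx.1, y, hy.1, hxy⟩
  have hex2 : ∃ a ∈ B2, ∃ b ∈ B2, a ≠ b := ⟨x, hx.2, y, hy.2, hxy⟩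
  have hconn : (G.induce (B1 ∪ B2)).Connected :=
    induce_union_connected h1.1.1.preconnected h2.1.1.preconnected ⟨x, hx⟩
  have hdel : ∀ t ∈ B1 ∪ B2, B1 ∪ B2 ≠ {t} → (G.induce ((B1 ∪ B2) \ {t})).Connected := by
    intro t _ _
    have E : (B1 ∪ B2) \ {t} = (B1 \ {t}) ∪ (B2 \ {t}) := by
      ext z; simp only [Set.mem_diff, Set.mem_union, Set.mem_singleton_iff]; tauto
    rw [E]
    have hz : ∃ z, z ∈ (B1 \ {t}) ∩ (B2 \ {t}) := by
      by_cases hxt : x = t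
      · exact ⟨y, ⟨hy.1, fun h => hxy (hxt.trans h.symm)⟩, hy.2, fun h => hxy (hxt.trans h.symm)⟩
      · exact ⟨x, ⟨hx.1, hxt⟩, hx.2, hxt⟩
    exact induce_union_connected (good_diff h1.1 hex1 t).preconnected (good_diff h2.1 hex2 t).preconnected hz
  have e1 := h1.2 (B1 ∪ B2) Set.subset_union_left ⟨hconn, hdel⟩
  have e2 := h2.2 (B1 ∪ B2) Set.subset_union_right ⟨hconn, hdel⟩
  exact hne (e1 ▸ e2)

lemma exists_adj [Fintype V] (hGc : G.Connected) (hn : 2 ≤ Fintype.card V) (v : V) :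
    ∃ x, G.Adj v x := by
  obtain ⟨w, hw⟩ := Fintype.exists_ne_of_one_lt_card (by omega) v
  obtain ⟨p⟩ := hGc.preconnected v w
  cases p with
  | nil => exact absurd rfl hw
  | cons h _ => exact ⟨_, h⟩

lemma block_exists_pair [Fintype V] (hGc : G.Connected) (hn : 2 ≤ Fintype.card V)
    {B : Set V} (hB : IsBlock G B) : ∃ x ∈ B, ∃ y ∈ B, x ≠ y := by
  obtain ⟨⟨a, ha⟩⟩ := hB.1.1.nonempty
  by_contra hcon
  push_neg at hcon
  have hBa : B = {a} := by
    ext z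
    simp only [Set.mem_singleton_iff]
    exact ⟨fun hz => hcon z hz a ha, fun hz => hz ▸ ha⟩
  obtain ⟨x, hax⟩ := exists_adj hGc hn a
  have hxa : x ≠ a := hax.ne'
  have hprop : (G.induce ({a, x} : Set V)).Connected ∧
      ∀ t ∈ ({a, x} : Set V), ({a, x} : Set V) ≠ {t} →
        (G.induce (({a, x} : Set V) \ {t})).Connected := by
    refine ⟨induce_pair_connected_of_adj hax, ?_⟩
    rintro t (rfl | rfl) _
    · have E : ({t, x} : Set V) \ {t} = {x} := by
        ext z
        simp only [Set.mem_diff, Set.mem_insert_iff, Set.mem_singleton_iff]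
        constructor
        · rintro ⟨rfl | rfl, h⟩
          · exact absurd rfl h
          · rfl
        · rintro rfl
          exact ⟨Or.inr rfl, hxa⟩
      rw [E]; exact singleton_induce_connected x
    · have E : ({a, t} : Set V) \ {t} = {a} := by
        ext z
        simp only [Set.mem_diff, Set.mem_insert_iff, Set.mem_singleton_iff]
        constructor
        · rintro ⟨rfl | rfl, h⟩
          · rfl
          · exact absurd rfl h
        · rintro rfl
          exact ⟨Or.inl rfl, Ne.symm hxa⟩
      rw [E]; exact singleton_induce_connected a
  have := hB.2 {a, x} (by rw [hBa]; exact fun z hz => Or.inl hz) hprop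
  rw [hBa] at this
  have : x ∈ ({a} : Set V) := this ▸ (Or.inr rfl : x ∈ ({a, x} : Set V))
  exact hxa this

lemma adj_of_pair_reachable {x y : V} (hxy : x ≠ y)
    (h : (G.induce ({x, y} : Set V)).Connected) : G.Adj x y := by
  have hx : x ∈ ({x, y} : Set V) := Or.inl rfl
  have hy : y ∈ ({x, y} : Set V) := Or.inr rfl
  obtain ⟨p⟩ := h.preconnected ⟨x, hx⟩ ⟨y, hy⟩
  cases p with
  | nil => exact absurd rfl hxy
  | cons h' q =>
    rename_i b
    have hb : G.Adj x ↑b := h'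
    rcases b.2 with hbx | hby
    · exact absurd hbx.symm hb.ne
    · exact hby ▸ hb

lemma path_pair_edge {a b : V} (hab : a ≠ b) (q : G.Walk a b) (hq : q.IsPath)
    (hsupp : suppSet q ⊆ {a, b}) : s(a, b) ∈ q.edges := by
  cases q with
  | nil => exact absurd rfl hab
  | cons h' r =>
    rename_i m
    have hm : m ∈ ({a, b} : Set V) := hsupp (by simp [suppSet])
    have hma : m ≠ a := h'.ne'
    have hmb : m = b := by
      rcases hm with h | h
      · exact absurd h hma
      · exact h
    subst hmb
    simp

lemma even_block_ncard [Fintype V] (h2 : TwoEdgeConnected G) (hn : 2 ≤ Fintype.card V)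
    {B : Set V} (hB : IsBlock G B) (heven : Even B.ncard) : 4 ≤ B.ncard := by
  classical
  obtain ⟨x, hx, y, hy, hxy⟩ := block_exists_pair h2.1 hn hB
  have h2le : 2 ≤ B.ncard := by
    have : 1 < B.ncard := (Set.one_lt_ncard B.toFinite).mpr ⟨x, hx, y, hy, hxy⟩
    omega
  have hne2 : B.ncard ≠ 2 := by
    intro hcard
    obtain ⟨a, b, hab, hBab⟩ := Set.ncard_eq_two.mp hcard
    subst hBab
    have hadj : G.Adj a b := adj_of_pair_reachable hab hB.1.1
    have he : s(a, b) ∈ G.edgeSet := hadj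
    have hdc := h2.2 _ he
    obtain ⟨w⟩ := hdc.preconnected a b
    have hle : G.deleteEdges {s(a, b)} ≤ G := deleteEdges_le _
    set p0 := w.toPath.1 with hp0
    have hp0path : p0.IsPath := w.toPath.2
    set q := p0.mapLe hle with hq
    have hqpath : q.IsPath := (Walk.mapLe_isPath hle).mpr hp0path
    have hsupp : suppSet q ⊆ {a, b} :=
      block_suppSet_subset hB ⟨a, Or.inl rfl, b, Or.inr rfl, hab⟩ (Or.inl rfl) (Or.inr rfl)
        q hqpath
    have hmem : s(a, b) ∈ q.edges := path_pair_edge hab q hqpath hsupp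
    have : s(a, b) ∈ p0.edges := by
      have := hmem
      rw [hq] at this
      unfold Walk.mapLe at this
      rw [Walk.edges_map] at this
      simp only [List.mem_map] at this
      obtain ⟨e', he', heq⟩ := this
      have : e' = s(a, b) := by
        rw [← heq]
        induction e' using Sym2.ind
        rfl
      exact this ▸ he'
    have hsub := p0.edges_subset_edgeSet this
    rw [edgeSet_deleteEdges] at hsub
    exact hsub.2 rfl
  obtain ⟨k, hk⟩ := heven
  omega

lemma induce_block_connected [Fintype V] {T : SimpleGraph V} (hTG : T ≤ G) (hTc : T.Connected)
    {B : Set V} (hB : IsBlock G B) (hex : ∃ x ∈ B, ∃ y ∈ B, x ≠ y) :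
    (T.induce B).Connected := by
  classical
  rw [connected_iff]
  refine ⟨fun x y => ?_, ⟨⟨_, hB.1.1.nonempty.some.2⟩⟩⟩
  obtain ⟨w⟩ := hTc.preconnected ↑x ↑y
  set p := w.toPath.1 with hp
  have hppath : p.IsPath := w.toPath.2
  have hqpath : (p.mapLe hTG).IsPath := (Walk.mapLe_isPath hTG).mpr hppath
  have hsupp : suppSet (p.mapLe hTG) ⊆ B :=
    block_suppSet_subset hB hex x.2 y.2 _ hqpath
  have hsupp' : suppSet p ⊆ B := by
    intro z hz
    apply hsupp
    simp only [suppSet, Set.mem_setOf_eq] at hz ⊢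
    unfold Walk.mapLe
    rw [Walk.support_map]
    simp only [List.mem_map]
    exact ⟨z, hz, rfl⟩
  have := reachable_induce_of_walk (G := T) p hsupp' x.2 y.2
  convert this



end Aux

theorem even_blocks_bound {V : Type*} [Fintype V] (G : SimpleGraph V)
    (hn : 2 ≤ Fintype.card V) (h2 : TwoEdgeConnected G) (r : ℕ)
    (hr : {B : Set V | IsBlock G B ∧ Even B.ncard}.ncard = r) :
    3 * r ≤ Fintype.card V - 1 := by

  classical
  obtain ⟨T, hTG, hTtree⟩ := exists_spanning_tree G h2.1
  haveI : Fintype T.edgeSet := Fintype.ofFinite _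
  set 𝓑 := {B : Set V | IsBlock G B ∧ Even B.ncard} with h𝓑
  have hfin : 𝓑.Finite := Set.toFinite _
  set 𝓔 := hfin.toFinset with h𝓔
  have hcard : 𝓔.card = r := by
    rw [Set.ncard_eq_toFinset_card _ hfin] at hr; exact hr
  set F : Set V → Finset (Sym2 V) := fun B =>
    (Set.toFinite ((Sym2.map (Subtype.val : ↥B → V)) '' (T.induce B).edgeSet)).toFinset
    with hF
  -- extraction helper
  have hext : ∀ B : Set V, ∀ e ∈ F B,
      ∃ x y : V, x ∈ B ∧ y ∈ B ∧ x ≠ y ∧ e = s(x, y) ∧ T.Adj x y := by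
    intro B e he
    rw [hF, Set.Finite.mem_toFinset] at he
    obtain ⟨e', he', rfl⟩ := he
    revert he'
    refine Sym2.ind (fun a b he' => ?_) e'
    have hadj : T.Adj ↑a ↑b := he'
    exact ⟨↑a, ↑b, a.2, b.2, fun h => hadj.ne h, by rw [Sym2.map_pair_eq], hadj⟩
  -- F B ⊆ edgeFinset T
  have hsub : ∀ B ∈ 𝓔, F B ⊆ T.edgeFinset := by
    intro B _ e he
    obtain ⟨x, y, _, _, _, rfl, hadj⟩ := hext B e he
    exact mem_edgeFinset.mpr hadj
  -- lower bound on card (F B)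
  have hlow : ∀ B ∈ 𝓔, 3 ≤ (F B).card := by
    intro B hB𝓔
    rw [h𝓔, Set.Finite.mem_toFinset] at hB𝓔
    obtain ⟨hBblock, hBeven⟩ := hB𝓔
    haveI : Fintype ↥B := B.toFinite.fintype
    have hex : ∃ x ∈ B, ∃ y ∈ B, x ≠ y := block_exists_pair h2.1 hn hBblock
    have hconn : (T.induce B).Connected := induce_block_connected hTG hTtree.1 hBblock hex
    obtain ⟨T', hT'le, hT'tree⟩ := exists_spanning_tree (T.induce B) hconn
    haveI : Fintype T'.edgeSet := Fintype.ofFinite _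
    haveI : Fintype (T.induce B).edgeSet := Fintype.ofFinite _
    have hc1 : T'.edgeFinset.card + 1 = Fintype.card ↥B := hT'tree.card_edgeFinset
    have hcB : Fintype.card ↥B = B.ncard := by
      rw [Set.ncard_eq_toFinset_card' B, Set.toFinset_card]
    have h4 : 4 ≤ B.ncard := even_block_ncard h2 hn hBblock hBeven
    have hmono : T'.edgeSet.ncard ≤ (T.induce B).edgeSet.ncard :=
      Set.ncard_le_ncard (edgeSet_subset_edgeSet.mpr hT'le) (Set.toFinite _)
    have he1 : T'.edgeSet.ncard = T'.edgeFinset.card := Set.ncard_eq_toFinset_card' _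
    have hFcard : (F B).card = (T.induce B).edgeSet.ncard := by
      rw [hF]
      rw [← Set.ncard_eq_toFinset_card _ (Set.toFinite _)]
      exact Set.ncard_image_of_injective _ (Sym2.map.injective Subtype.val_injective)
    omega
  -- pairwise disjointness
  have hdisj : ∀ B1 ∈ 𝓔, ∀ B2 ∈ 𝓔, B1 ≠ B2 → Disjoint (F B1) (F B2) := by
    intro B1 h1 B2 h2' hne
    rw [h𝓔, Set.Finite.mem_toFinset] at h1 h2'
    rw [Finset.disjoint_left]
    intro e he1 he2
    obtain ⟨x, y, hx1, hy1, hxy, rfl, _⟩ := hext B1 e he1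
    obtain ⟨x', y', hx2, hy2, _, heq, _⟩ := hext B2 _ he2
    have hx2' : x ∈ B2 := by
      have : x ∈ s(x', y') := heq ▸ Sym2.mem_mk_left x y
      rcases Sym2.mem_iff.mp this with h | h
      · exact h ▸ hx2
      · exact h ▸ hy2
    have hy2' : y ∈ B2 := by
      have : y ∈ s(x', y') := heq ▸ Sym2.mem_mk_right x y
      rcases Sym2.mem_iff.mp this with h | h
      · exact h ▸ hx2
      · exact h ▸ hy2
    exact hxy (blocks_inter h1.1 h2'.1 hne ⟨hx1, hx2'⟩ ⟨hy1, hy2'⟩)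
  -- combine
  have hsum : 𝓔.card • 3 ≤ ∑ B ∈ 𝓔, (F B).card := Finset.card_nsmul_le_sum 𝓔 _ 3 hlow
  have hbU : (𝓔.biUnion F).card = ∑ B ∈ 𝓔, (F B).card := Finset.card_biUnion hdisj
  have hbUsub : 𝓔.biUnion F ⊆ T.edgeFinset := Finset.biUnion_subset.mpr hsub
  have hTcard : T.edgeFinset.card + 1 = Fintype.card V := hTtree.card_edgeFinset
  have := Finset.card_le_card hbUsub
  rw [smul_eq_mul] at hsum
  omega
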